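/- Let h ≥ 0 and let f₁, f₂, f₃ : ℝ → ℂ be continuous on [0, h]. Then ∫₀ʰ f₁(ζ) (∫₀^ζ f₂(ξ) dξ) (∫₀^ζ f₃(ξ) dξ) dζ = ∫₀ʰ (∫_ξ^h f₁(ζ) dζ) (f₂(ξ) ∫₀^ξ f₃(η) dη + f₃(ξ) ∫₀^ξ f₂(η) dη) dξ. -/

import Mathlib

open intervalIntegral MeasureTheory

lemma integral_identity_pyramid_aux (h : ℝ) (f₁ f₂ f₃ : ℝ → ℂ)
    (h1 : Continuous f₁) (h2 : Continuous f₂) (h3 : Continuous f₃) :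
    ∫ ζ in (0:ℝ)..h, f₁ ζ * (∫ ξ in (0:ℝ)..ζ, f₂ ξ) * (∫ ξ in (0:ℝ)..ζ, f₃ ξ)
      = ∫ ξ in (0:ℝ)..h, (∫ ζ in ξ..h, f₁ ζ) *
          (f₂ ξ * (∫ η in (0:ℝ)..ξ, f₃ η) + f₃ ξ * (∫ η in (0:ℝ)..ξ, f₂ η)) := by
  set F : ℝ → ℂ := fun ζ => ∫ ξ in (0:ℝ)..ζ, f₂ ξ with hFdef
  set G : ℝ → ℂ := fun ζ => ∫ ξ in (0:ℝ)..ζ, f₃ ξ with hGdef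
  set V : ℝ → ℂ := fun ζ => ∫ ξ in (0:ℝ)..ζ, f₁ ξ with hVdef
  have hF : ∀ x : ℝ, HasDerivAt F (f₂ x) x := fun x =>
    (h2.integral_hasStrictDerivAt 0 x).hasDerivAt
  have hG : ∀ x : ℝ, HasDerivAt G (f₃ x) x := fun x =>
    (h3.integral_hasStrictDerivAt 0 x).hasDerivAt
  have hV : ∀ x : ℝ, HasDerivAt V (f₁ x) x := fun x =>
    (h1.integral_hasStrictDerivAt 0 x).hasDerivAt
  have hU : ∀ x : ℝ, HasDerivAt (fun y => F y * G y)
      (f₂ x * G x + f₃ x * F x) x := fun x => by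
    have := (hF x).mul (hG x)
    have h' : HasDerivAt (F * G) (f₂ x * G x + f₃ x * F x) x := by
      simpa [mul_comm, add_comm] using this
    exact h'
  have hFc : Continuous F := continuous_iff_continuousAt.2 fun x => (hF x).continuousAt
  have hGc : Continuous G := continuous_iff_continuousAt.2 fun x => (hG x).continuousAt
  have hVc : Continuous V := continuous_iff_continuousAt.2 fun x => (hV x).continuousAt
  have hU'c : Continuous fun x => f₂ x * G x + f₃ x * F x :=
    (h2.mul hGc).add (h3.mul hFc)
  -- integration by parts
  have key := integral_mul_deriv_eq_deriv_mul (a := 0) (b := h)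
    (u := fun y => F y * G y) (v := V)
    (u' := fun x => f₂ x * G x + f₃ x * F x) (v' := f₁)
    (fun x _ => hU x) (fun x _ => hV x)
    (hU'c.intervalIntegrable 0 h) (h1.intervalIntegrable 0 h)
  have hF0 : F 0 = 0 := integral_same
  have hG0 : G 0 = 0 := integral_same
  have hV0 : V 0 = 0 := integral_same
  -- FTC for u'
  have ftc : (∫ x in (0:ℝ)..h, (f₂ x * G x + f₃ x * F x)) = F h * G h := by
    have := integral_eq_sub_of_hasDerivAt (f := fun y => F y * G y)
      (f' := fun x => f₂ x * G x + f₃ x * F x) (fun x _ => hU x)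
      (hU'c.intervalIntegrable 0 h)
    simpa [hF0, hG0] using this
  -- rewrite the inner integral ∫ ζ in ξ..h, f₁ ζ as V h - V ξ
  have hsub : ∀ ξ : ℝ, (∫ ζ in ξ..h, f₁ ζ) = V h - V ξ := fun ξ => by
    rw [hVdef]
    exact (integral_interval_sub_left (h1.intervalIntegrable 0 h)
      (h1.intervalIntegrable 0 ξ)).symm
  calc ∫ ζ in (0:ℝ)..h, f₁ ζ * F ζ * G ζ
      = ∫ ζ in (0:ℝ)..h, (fun y => F y * G y) ζ * f₁ ζ := by
        congr 1; ext ζ; ring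
    _ = F h * G h * V h - ∫ x in (0:ℝ)..h, (f₂ x * G x + f₃ x * F x) * V x := by
        rw [key]; simp only [hV0, mul_zero, sub_zero]
    _ = ∫ ξ in (0:ℝ)..h, (V h - V ξ) * (f₂ ξ * G ξ + f₃ ξ * F ξ) := by
        rw [sub_eq_iff_eq_add]
        have hint1 : IntervalIntegrable (fun ξ => V h * (f₂ ξ * G ξ + f₃ ξ * F ξ))
            volume 0 h := (continuous_const.mul hU'c).intervalIntegrable 0 h
        have hint2 : IntervalIntegrable (fun ξ => V ξ * (f₂ ξ * G ξ + f₃ ξ * F ξ))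
            volume 0 h := (hVc.mul hU'c).intervalIntegrable 0 h
        have : (∫ ξ in (0:ℝ)..h, (V h - V ξ) * (f₂ ξ * G ξ + f₃ ξ * F ξ))
            = (∫ ξ in (0:ℝ)..h, V h * (f₂ ξ * G ξ + f₃ ξ * F ξ))
              - ∫ ξ in (0:ℝ)..h, V ξ * (f₂ ξ * G ξ + f₃ ξ * F ξ) := by
          rw [← integral_sub hint1 hint2]
          congr 1; ext ξ; ring
        rw [this, intervalIntegral.integral_const_mul, ftc]
        have : (∫ ξ in (0:ℝ)..h, V ξ * (f₂ ξ * G ξ + f₃ ξ * F ξ))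
            = ∫ x in (0:ℝ)..h, (f₂ x * G x + f₃ x * F x) * V x := by
          congr 1; ext ξ; ring
        rw [this]; ring
    _ = ∫ ξ in (0:ℝ)..h, (∫ ζ in ξ..h, f₁ ζ) * (f₂ ξ * G ξ + f₃ ξ * F ξ) := by
        congr 1; ext ξ; rw [hsub]

theorem integral_identity_pyramid (h : ℝ) (hh : 0 ≤ h) (f₁ f₂ f₃ : ℝ → ℂ)
    (hf₁ : ContinuousOn f₁ (Set.Icc 0 h)) (hf₂ : ContinuousOn f₂ (Set.Icc 0 h))
    (hf₃ : ContinuousOn f₃ (Set.Icc 0 h)) :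
    ∫ ζ in (0:ℝ)..h, f₁ ζ * (∫ ξ in (0:ℝ)..ζ, f₂ ξ) * (∫ ξ in (0:ℝ)..ζ, f₃ ξ)
      = ∫ ξ in (0:ℝ)..h, (∫ ζ in ξ..h, f₁ ζ) *
          (f₂ ξ * (∫ η in (0:ℝ)..ξ, f₃ η) + f₃ ξ * (∫ η in (0:ℝ)..ξ, f₂ η)) := by
  set g₁ : ℝ → ℂ := Set.IccExtend hh (fun x : Set.Icc (0:ℝ) h => f₁ x) with hg₁def
  set g₂ : ℝ → ℂ := Set.IccExtend hh (fun x : Set.Icc (0:ℝ) h => f₂ x) with hg₂def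
  set g₃ : ℝ → ℂ := Set.IccExtend hh (fun x : Set.Icc (0:ℝ) h => f₃ x) with hg₃def
  have hc₁ : Continuous g₁ := (continuousOn_iff_continuous_restrict.mp hf₁).Icc_extend'
  have hc₂ : Continuous g₂ := (continuousOn_iff_continuous_restrict.mp hf₂).Icc_extend'
  have hc₃ : Continuous g₃ := (continuousOn_iff_continuous_restrict.mp hf₃).Icc_extend'
  have he₁ : ∀ x ∈ Set.Icc (0:ℝ) h, g₁ x = f₁ x := fun x hx => Set.IccExtend_of_mem hh _ hx
  have he₂ : ∀ x ∈ Set.Icc (0:ℝ) h, g₂ x = f₂ x := fun x hx => Set.IccExtend_of_mem hh _ hx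
  have he₃ : ∀ x ∈ Set.Icc (0:ℝ) h, g₃ x = f₃ x := fun x hx => Set.IccExtend_of_mem hh _ hx
  have key := integral_identity_pyramid_aux h g₁ g₂ g₃ hc₁ hc₂ hc₃
  have huIcc : Set.uIcc (0:ℝ) h = Set.Icc 0 h := Set.uIcc_of_le hh
  have hsub : ∀ ξ ∈ Set.Icc (0:ℝ) h, Set.uIcc (0:ℝ) ξ ⊆ Set.Icc 0 h := fun ξ hξ => by
    rw [Set.uIcc_of_le hξ.1]; exact Set.Icc_subset_Icc le_rfl hξ.2
  have hsub' : ∀ ξ ∈ Set.Icc (0:ℝ) h, Set.uIcc ξ h ⊆ Set.Icc 0 h := fun ξ hξ => by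
    rw [Set.uIcc_of_le hξ.2]; exact Set.Icc_subset_Icc hξ.1 le_rfl
  have lhs_eq : (∫ ζ in (0:ℝ)..h, g₁ ζ * (∫ ξ in (0:ℝ)..ζ, g₂ ξ) * (∫ ξ in (0:ℝ)..ζ, g₃ ξ))
      = ∫ ζ in (0:ℝ)..h, f₁ ζ * (∫ ξ in (0:ℝ)..ζ, f₂ ξ) * (∫ ξ in (0:ℝ)..ζ, f₃ ξ) := by
    apply intervalIntegral.integral_congr
    intro ζ hζ
    rw [huIcc] at hζ
    beta_reduce
    rw [he₁ ζ hζ,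
      intervalIntegral.integral_congr (fun x hx => he₂ x (hsub ζ hζ hx)),
      intervalIntegral.integral_congr (fun x hx => he₃ x (hsub ζ hζ hx))]
  have rhs_eq : (∫ ξ in (0:ℝ)..h, (∫ ζ in ξ..h, g₁ ζ) *
        (g₂ ξ * (∫ η in (0:ℝ)..ξ, g₃ η) + g₃ ξ * (∫ η in (0:ℝ)..ξ, g₂ η)))
      = ∫ ξ in (0:ℝ)..h, (∫ ζ in ξ..h, f₁ ζ) *
          (f₂ ξ * (∫ η in (0:ℝ)..ξ, f₃ η) + f₃ ξ * (∫ η in (0:ℝ)..ξ, f₂ η)) := by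
    apply intervalIntegral.integral_congr
    intro ξ hξ
    rw [huIcc] at hξ
    beta_reduce
    rw [he₂ ξ hξ, he₃ ξ hξ,
      intervalIntegral.integral_congr (fun x hx => he₁ x (hsub' ξ hξ hx)),
      intervalIntegral.integral_congr (fun x hx => he₂ x (hsub ξ hξ hx)),
      intervalIntegral.integral_congr (fun x hx => he₃ x (hsub ξ hξ hx))]
  rw [← lhs_eq, ← rhs_eq, key]
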